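/- If p is an odd prime and x, y, z are natural numbers with y ≥ 1 satisfying 64^x + p^y = z², then y = 1, p = 1 + 2^(3x+1), and z = 2^(3x) + 1. -/

import Mathlib

/-- Key lemma: if `p` is an odd prime and `p ^ y = 2 ^ n + 1` with `n % 3 = 1`,
then `y = 1`. -/
lemma stmt8_key (p y n : ℕ) (hp : p.Prime) (hodd : Odd p) (hy : 1 ≤ y)
    (hn : n % 3 = 1) (h : p ^ y = 2 ^ n + 1) : y = 1 := by
  by_contra hne
  have hy2 : 2 ≤ y := by omega
  have hp3 : 3 ≤ p := by
    have := hp.two_le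
    rcases hodd with ⟨k, hk⟩
    omega
  rcases Nat.even_or_odd y with heven | hoddy
  · -- y even: y = 2*m
    obtain ⟨m, hm⟩ := heven
    have hm1 : 1 ≤ m := by omega
    set q := p ^ m with hq
    have hq3 : 3 ≤ q := by
      calc 3 ≤ p := hp3
        _ = p ^ 1 := (pow_one p).symm
        _ ≤ p ^ m := Nat.pow_le_pow_right (by omega) hm1
    have hqsq : q ^ 2 = 2 ^ n + 1 := by
      rw [hq, ← pow_mul]
      rw [show m * 2 = y by omega]
      exact h
    -- write q = r + 1
    obtain ⟨r, hr⟩ : ∃ r, q = r + 1 := ⟨q - 1, by omega⟩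
    have hr2 : 2 ≤ r := by omega
    have hfac : r * (r + 2) = 2 ^ n := by nlinarith [hqsq, hr]
    have hd1 : r ∣ 2 ^ n := ⟨r + 2, hfac.symm⟩
    have hd2 : (r + 2) ∣ 2 ^ n := Dvd.intro_left r hfac
    obtain ⟨u, hu, hru⟩ := (Nat.dvd_prime_pow Nat.prime_two).mp hd1
    obtain ⟨v, hv, hrv⟩ := (Nat.dvd_prime_pow Nat.prime_two).mp hd2
    have hu1 : 1 ≤ u := by
      by_contra hu0
      interval_cases u; omega
    have hu2 : u = 1 := by
      by_contra hu2
      have h4u : (4 : ℕ) ∣ 2 ^ u := by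
        have : (2:ℕ)^2 ∣ 2 ^ u := Nat.pow_dvd_pow 2 (by omega)
        simpa using this
      have hv3 : 3 ≤ v := by
        have : 2 ^ v = 2 ^ u + 2 := by omega
        have h6 : 6 ≤ 2 ^ v := by
          have : (4:ℕ) ≤ 2 ^ u := by
            calc (4:ℕ) = 2^2 := by norm_num
              _ ≤ 2 ^ u := Nat.pow_le_pow_right (by omega) (by omega)
          omega
        by_contra hv3
        interval_cases v <;> omega
      have h4v : (4 : ℕ) ∣ 2 ^ v := by
        have : (2:ℕ)^2 ∣ 2 ^ v := Nat.pow_dvd_pow 2 (by omega)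
        simpa using this
      omega
    -- u = 1, r = 2, so 2^v = 4, v = 2, 2^n = 8
    have hrval : r = 2 := by rw [hru, hu2, pow_one]
    have hvval : 2 ^ v = 4 := by omega
    have hv2 : v = 2 := by
      exact Nat.pow_right_injective (le_refl 2) (show (2:ℕ) ^ v = 2 ^ 2 by omega)
    have h2n : (2:ℕ) ^ n = 8 := by
      rw [← hfac, hrval]
    have hn3 : n = 3 := by
      exact Nat.pow_right_injective (le_refl 2) (show (2:ℕ) ^ n = 2 ^ 3 by omega)
    omega
  · -- y odd, y ≥ 3
    set S : ℕ := ∑ i ∈ Finset.range y, p ^ i with hS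
    have hgeom : (S : ℤ) * ((p : ℤ) - 1) = (p : ℤ) ^ y - 1 := by
      rw [hS]
      push_cast
      exact geom_sum_mul (p : ℤ) y
    have hSz : (S : ℤ) * ((p : ℤ) - 1) = ((2 ^ n : ℕ) : ℤ) := by
      rw [hgeom]
      have : ((p ^ y : ℕ) : ℤ) = ((2 ^ n + 1 : ℕ) : ℤ) := Nat.cast_inj.mpr h
      push_cast at this ⊢
      omega
    have hSdvdZ : (S : ℤ) ∣ ((2 ^ n : ℕ) : ℤ) := ⟨(p : ℤ) - 1, hSz.symm⟩
    have hSdvd : S ∣ 2 ^ n := by exact_mod_cast hSdvdZ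
    -- S is odd
    have hpodd : p % 2 = 1 := Nat.odd_iff.mp hodd
    have hSmod : S % 2 = 1 := by
      rw [hS, Finset.sum_nat_mod]
      have : ∀ i ∈ Finset.range y, p ^ i % 2 = 1 := by
        intro i _
        rw [Nat.pow_mod, hpodd, one_pow]
        rfl
      rw [Finset.sum_congr rfl this]
      simp [Nat.odd_iff.mp hoddy]
    obtain ⟨k, hk, hSk⟩ := (Nat.dvd_prime_pow Nat.prime_two).mp hSdvd
    have hk0 : k = 0 := by
      by_contra hk0
      have : (2:ℕ) ∣ S := hSk ▸ dvd_pow_self 2 hk0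
      omega
    have hS1 : S = 1 := by rw [hSk, hk0, pow_zero]
    -- but S ≥ 1 + p
    have hSge : 1 + p ≤ S := by
      have hsub : Finset.range 2 ⊆ Finset.range y := Finset.range_subset_range.mpr hy2
      have := Finset.sum_le_sum_of_subset (f := fun i => p ^ i) hsub
      simpa [Finset.sum_range_succ] using this
    omega

theorem stmt8 (p x y z : ℕ) (hp : p.Prime) (hodd : Odd p) (hy : 1 ≤ y)
    (h : 64 ^ x + p ^ y = z ^ 2) :
    y = 1 ∧ p = 1 + 2 ^ (3 * x + 1) ∧ z = 2 ^ (3 * x) + 1 := by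
  set a := 2 ^ (3 * x) with ha
  have h64 : (64 : ℕ) ^ x = a ^ 2 := by
    rw [ha, ← pow_mul, show (64:ℕ) = 2 ^ 6 by norm_num, ← pow_mul]
    ring_nf
  rw [h64] at h
  have hppos : 1 ≤ p ^ y := Nat.one_le_pow _ _ hp.pos
  have haz : a < z := by
    by_contra hle
    have : z ^ 2 ≤ a ^ 2 := Nat.pow_le_pow_left (by omega) 2
    omega
  have hsub : z ^ 2 - a ^ 2 = p ^ y := by omega
  have hfac : p ^ y = (z + a) * (z - a) := by
    rw [← hsub, Nat.sq_sub_sq]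
  have hd : (z - a) ∣ p ^ y := Dvd.intro_left _ hfac.symm
  obtain ⟨i, hi, hzi⟩ := (Nat.dvd_prime_pow hp).mp hd
  have hza : z + a = p ^ (y - i) := by
    have hppow : 0 < p ^ i := Nat.pow_pos hp.pos
    have : p ^ i * (z + a) = p ^ i * p ^ (y - i) := by
      rw [← pow_add, show i + (y - i) = y by omega, hfac, hzi]
      ring
    exact Nat.eq_of_mul_eq_mul_left hppow this
  have hi0 : i = 0 := by
    by_contra hi0
    have hp1 : p ∣ z - a := hzi ▸ dvd_pow_self p hi0
    have ha1 : 1 ≤ a := by rw [ha]; exact Nat.one_le_two_pow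
    have hp2 : p ∣ z + a := by
      have hne2 : y - i ≠ 0 := by
        intro h0
        rw [h0, pow_zero] at hza
        omega
      rw [hza]
      exact dvd_pow_self p hne2
    have hp2a : p ∣ 2 * a := by
      have := Nat.dvd_sub hp2 hp1
      have heq : z + a - (z - a) = 2 * a := by omega
      rwa [heq] at this
    have h2a : 2 * a = 2 ^ (3 * x + 1) := by rw [ha, pow_succ]; ring
    rw [h2a] at hp2a
    have : p = 2 := (Nat.prime_dvd_prime_iff_eq hp Nat.prime_two).mp
      (hp.dvd_of_dvd_pow hp2a)
    have := Nat.odd_iff.mp hodd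
    omega
  have hz1 : z - a = 1 := by rw [hzi, hi0, pow_zero]
  have hzval : z = a + 1 := by omega
  have hpy : p ^ y = 2 ^ (3 * x + 1) + 1 := by
    have : p ^ y = z + a := by rw [hza, hi0, Nat.sub_zero]
    rw [this, hzval, ha, pow_succ]
    ring
  have hy1 : y = 1 := stmt8_key p y (3 * x + 1) hp hodd hy (by omega) hpy
  refine ⟨hy1, ?_, ?_⟩
  · rw [hy1, pow_one] at hpy
    omega
  · rw [hzval, ha]
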